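/- arXiv:1310.1174 — 2 statements merged into one kernel-verified Lean document; each statement's English description precedes it below -/
import Mathlib

section
/- Let C1 be a q-ary 1-perfect code of length n, i a coordinate, σ a permutation of F_q, and R an (i,σ)-component of C1. Then (C1 \ R) ∪ σ(R) is a q-ary 1-perfect code of length n, where σ(R) = {(x_1,...,σ(x_i),...,x_n) : x ∈ R}. -/
/-- `C` is a 1-perfect code over the alphabet `F` with coordinate set `ι`. -/
def IsOnePerfectCode {ι F : Type*} [Fintype ι] [Fintype F] [DecidableEq F]
    (C : Set (ι → F)) : Prop :=
  (∀ x ∈ C, ∀ y ∈ C, x ≠ y → 3 ≤ hammingDist x y) ∧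
  Nat.card C * (1 + Fintype.card ι * (Fintype.card F - 1)) =
    Fintype.card F ^ Fintype.card ι

/-- Apply the permutation `σ` of the alphabet to the `i`-th coordinate:
`y ↦ y(i,σ) = (y_1, …, σ(y_i), …, y_n)`. -/
def applyAt {n : ℕ} {F : Type*} (i : Fin n) (σ : Equiv.Perm F)
    (x : Fin n → F) : Fin n → F :=
  Function.update x i (σ (x i))

/-- `R` is an `(i,σ)`-component of `C`: `R ⊆ C` and for every `y ∈ R`, every
`x ∈ C` with `d(x, y(i,σ)) = 2` also belongs to `R`. -/
def IsISigmaComponent {n : ℕ} {F : Type*} [DecidableEq F] (C : Set (Fin n → F))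
    (i : Fin n) (σ : Equiv.Perm F) (R : Set (Fin n → F)) : Prop :=
  R ⊆ C ∧ ∀ y ∈ R, ∀ x ∈ C, hammingDist x (applyAt i σ y) = 2 → x ∈ R

/-- switching an `(i,σ)`-component. If `C1` is a `q`-ary 1-perfect
code of length `n`, `i` a coordinate, `σ` a permutation of `F_q`, and `R` an
`(i,σ)`-component of `C1`, then `(C1 \ R) ∪ σ(R)` is a `q`-ary 1-perfect code. -/
theorem switching_i_sigma_component {n : ℕ} {F : Type*} [Field F] [Fintype F] [DecidableEq F]
    (C1 : Set (Fin n → F)) (hC1 : IsOnePerfectCode C1) (i : Fin n)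
    (σ : Equiv.Perm F) (R : Set (Fin n → F))
    (hR : IsISigmaComponent C1 i σ R) :
    IsOnePerfectCode ((C1 \ R) ∪ applyAt i σ '' R) := by
  obtain ⟨hd, hcard⟩ := hC1
  obtain ⟨hRC, hcomp⟩ := hR
  -- injectivity of applyAt
  have hinj : Function.Injective (applyAt i σ) := by
    intro a b h
    funext j
    by_cases hj : j = i
    · subst hj
      have h2 : σ (a j) = σ (b j) := by simpa [applyAt] using congrFun h j
      exact σ.injective h2
    · have := congrFun h j
      simpa [applyAt, Function.update_of_ne hj] using this
  -- distance preservation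
  have hd_eq : ∀ a b : Fin n → F,
      hammingDist (applyAt i σ a) (applyAt i σ b) = hammingDist a b := by
    intro a b
    unfold hammingDist
    congr 1
    ext j
    by_cases hj : j = i
    · subst hj; simp only [Finset.mem_filter, Finset.mem_univ, true_and]; simp [applyAt, σ.injective.ne_iff]
    · simp only [Finset.mem_filter, Finset.mem_univ, true_and]; simp [applyAt, Function.update_of_ne hj]
  -- applyAt moves a point by distance at most 1
  have hd_le : ∀ b : Fin n → F, hammingDist (applyAt i σ b) b ≤ 1 := by
    intro b
    have : Finset.filter (fun j => applyAt i σ b j ≠ b j) Finset.univ ⊆ {i} := by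
      intro j hj
      simp only [Finset.mem_filter] at hj
      by_contra hji
      simp only [Finset.mem_singleton] at hji
      exact hj.2 (by simp [applyAt, Function.update_of_ne hji])
    calc hammingDist (applyAt i σ b) b
        = (Finset.filter (fun j => applyAt i σ b j ≠ b j) Finset.univ).card := rfl
      _ ≤ ({i} : Finset (Fin n)).card := Finset.card_le_card this
      _ = 1 := Finset.card_singleton i
  -- core distance lemma for mixed case
  have hcore : ∀ x ∈ C1, x ∉ R → ∀ b ∈ R, 3 ≤ hammingDist x (applyAt i σ b) := by
    intro x hx hxR b hb
    by_contra hlt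
    push_neg at hlt
    interval_cases hdist : hammingDist x (applyAt i σ b)
    · -- distance 0 : x = applyAt i σ b
      have hx0 : x = applyAt i σ b := by
        have := hammingDist_eq_zero.mp hdist
        exact this
      have h1 : hammingDist x b ≤ 1 := hx0 ▸ hd_le b
      by_cases hxb : x = b
      · exact hxR (hxb ▸ hb)
      · have := hd x hx b (hRC hb) hxb
        omega
    · -- distance 1
      have h2 : hammingDist x b ≤ 2 := by
        have := hammingDist_triangle x (applyAt i σ b) b
        have := hd_le b
        omega
      by_cases hxb : x = b
      · exact hxR (hxb ▸ hb)
      · have := hd x hx b (hRC hb) hxb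
        omega
    · -- distance 2 : component property
      exact hxR (hcomp b hb x hx hdist)
  constructor
  · -- minimum distance
    intro x hx y hy hne
    rcases hx with hx | ⟨a, ha, rfl⟩ <;> rcases hy with hy | ⟨b, hb, rfl⟩
    · exact hd x hx.1 y hy.1 hne
    · exact hcore x hx.1 hx.2 b hb
    · rw [hammingDist_comm]
      exact hcore y hy.1 hy.2 a ha
    · rw [hd_eq]
      exact hd a (hRC ha) b (hRC hb) fun h => hne (h ▸ rfl)
  · -- cardinality
    have hdisj : Disjoint (C1 \ R) (applyAt i σ '' R) := by
      rw [Set.disjoint_left]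
      rintro x hx ⟨b, hb, rfl⟩
      have := hcore _ hx.1 hx.2 b hb
      simp at this
    have hsize : ((C1 \ R) ∪ applyAt i σ '' R).ncard = C1.ncard := by
      rw [Set.ncard_union_eq hdisj (Set.toFinite _) (Set.toFinite _),
        Set.ncard_image_of_injective _ hinj,
        Set.ncard_diff_add_ncard_of_subset hRC (Set.toFinite _)]
    rw [Nat.card_coe_set_eq, hsize, ← Nat.card_coe_set_eq]
    exact hcard
end

section
/- Let H_{q,m} be the q-ary Hamming code of length n = (q^m−1)/(q−1), m ≥ 2, let R_i be the subspace spanned by all weight-3 codewords of H_{q,m} with a 1 in coordinate i, and let u ∈ H_{q,m}. Then R_i + u is an i-component of H_{q,m}: the punctured set (R_i + u)^i is a connected component of the minimum distance graph of the punctured code H_{q,m}^i. -/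
variable {F : Type*} [Field F] [Fintype F] [DecidableEq F] {m n : ℕ}

/-- The linear code with parity-check columns `h`. -/
def parityCheckCode (h : Fin n → Fin m → F) : Submodule F (Fin n → F) where
  carrier := {x | ∑ j, x j • h j = 0}
  add_mem' := by
    intro a b ha hb
    simp only [Set.mem_setOf_eq, Pi.add_apply, add_smul, Finset.sum_add_distrib] at *
    simp [ha, hb]
  zero_mem' := by simp
  smul_mem' := by
    intro c a ha
    simp only [Set.mem_setOf_eq, Pi.smul_apply, smul_eq_mul, mul_smul] at *
    rw [← Finset.smul_sum, ha, smul_zero]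

/-- The submodule of vectors supported inside the coordinate set `l`. -/
def supportedIn (l : Set (Fin n)) : Submodule F (Fin n → F) where
  carrier := {u | ∀ j ∉ l, u j = 0}
  add_mem' := by intro a b ha hb j hj; simp [ha j hj, hb j hj]
  zero_mem' := by intro j hj; simp
  smul_mem' := by intro c a ha j hj; simp [ha j hj]

/-- The principal `i`-component `R_i`: span of all triples (codewords of
weight 3) with a `1` in coordinate `i`. -/
def principalComponent (h : Fin n → Fin m → F) (i : Fin n) : Submodule F (Fin n → F) :=
  Submodule.span F {u | u ∈ parityCheckCode h ∧ hammingNorm u = 3 ∧ u i = 1}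

/-- The line of `PG_{m−1}(q)` through the points `a` and `b`, viewed as a set
of coordinates: `k` is on the line iff `h_k` is in the span of `h_a, h_b`. -/
def lineThrough (h : Fin n → Fin m → F) (a b : Fin n) : Set (Fin n) :=
  {k | h k ∈ Submodule.span F {h a, h b}}


/-- Adjacency for the minimum distance graph of the punctured code `C^i`. -/
def PunctAdj (C : Set (Fin n → F)) (i : Fin n) (a b : Fin n → F) : Prop :=
  a ∈ C ∧ b ∈ C ∧
    hammingDist (fun j : {j : Fin n // j ≠ i} => a j) (fun j : {j : Fin n // j ≠ i} => b j) = 2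

/-- `R` is an `i`-component of `C`: its punctured image is a connected
component of the minimum distance graph of the punctured code `C^i`. -/
def IsIComponent (C : Set (Fin n → F)) (i : Fin n) (R : Set (Fin n → F)) : Prop :=
  ∃ x ∈ C, R = {y ∈ C | Relation.ReflTransGen (PunctAdj C i) x y}

set_option linter.unusedSectionVars false

lemma mem_parityCheckCode {h : Fin n → Fin m → F} {x : Fin n → F} :
    x ∈ parityCheckCode h ↔ ∑ j, x j • h j = 0 := Iff.rfl

/-- puncturing norm count -/
lemma punct_norm_add (d : Fin n → F) (i : Fin n) :
    hammingNorm d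
      = hammingNorm (fun j : {j : Fin n // j ≠ i} => d j)
        + (if d i ≠ 0 then 1 else 0) := by
  classical
  simp only [hammingNorm]
  have hmap : (Finset.univ.filter fun j : {j : Fin n // j ≠ i} => d j ≠ 0).map
      ⟨Subtype.val, Subtype.val_injective⟩
      = Finset.univ.filter fun j : Fin n => j ≠ i ∧ d j ≠ 0 := by
    ext j
    simp [Finset.mem_map, Subtype.exists]
    tauto
  rw [← Finset.card_map ⟨Subtype.val, Subtype.val_injective⟩, hmap]
  have key : (Finset.univ.filter fun j : Fin n => j ≠ i ∧ d j ≠ 0)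
      = (Finset.univ.filter fun j : Fin n => d j ≠ 0).erase i := by
    ext j
    simp [Finset.mem_erase, and_comm]
  rw [key]
  by_cases hdi : d i ≠ 0
  · have hi : i ∈ Finset.univ.filter fun j : Fin n => d j ≠ 0 := by simp [hdi]
    rw [Finset.card_erase_of_mem hi, if_pos hdi]
    have : 1 ≤ (Finset.univ.filter fun j : Fin n => d j ≠ 0).card :=
      Finset.card_pos.mpr ⟨i, hi⟩
    omega
  · rw [Finset.erase_eq_of_notMem (by simp [hdi]), if_neg hdi]
    simp

lemma punct_dist_eq (a b : Fin n → F) (i : Fin n) :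
    hammingDist (fun j : {j : Fin n // j ≠ i} => a j) (fun j : {j : Fin n // j ≠ i} => b j)
      = hammingNorm (fun j : {j : Fin n // j ≠ i} => (b - a) j) := by
  simp only [hammingDist, hammingNorm, Pi.sub_apply, sub_ne_zero]
  congr 1
  ext j
  simp [ne_comm]

lemma hammingNorm_smul_ne {c : F} (hc : c ≠ 0) (d : Fin n → F) :
    hammingNorm (c • d) = hammingNorm d := by
  refine hammingNorm_smul (fun _ => ?_) d
  intro a b hab
  exact mul_left_cancel₀ hc (by simpa [smul_eq_mul] using hab)

/-- minimum distance of the Hamming code is ≥ 3 -/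
lemma mindist (h : Fin n → Fin m → F)
    (hnz : ∀ j, h j ≠ 0)
    (hnp : ∀ j k, j ≠ k → ∀ c : F, h j ≠ c • h k)
    {x : Fin n → F} (hx : x ∈ parityCheckCode h) (hx0 : x ≠ 0) :
    3 ≤ hammingNorm x := by
  classical
  by_contra hlt
  push_neg at hlt
  set s : Finset (Fin n) := Finset.univ.filter fun j => x j ≠ 0 with hs
  have hsum : ∑ j ∈ s, x j • h j = 0 := by
    have step : ∑ j ∈ s, x j • h j = ∑ j, x j • h j := by
      refine Finset.sum_subset (Finset.subset_univ s) ?_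
      intro j _ hj
      have : x j = 0 := by
        by_contra hne; exact hj (by simp [hs, hne])
      simp [this]
    rw [step]; exact mem_parityCheckCode.mp hx
  have hcard : s.card = hammingNorm x := rfl
  have hne : s.Nonempty := by
    obtain ⟨j, hj⟩ := Function.ne_iff.mp hx0
    exact ⟨j, by simp [hs]; simpa using hj⟩
  have h1 : 1 ≤ s.card := Finset.card_pos.mpr hne
  have h2 : s.card = 1 ∨ s.card = 2 := by omega
  rcases h2 with hc | hc
  · obtain ⟨j, hj⟩ := Finset.card_eq_one.mp hc
    rw [hj, Finset.sum_singleton] at hsum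
    have hxj : x j ≠ 0 := by
      have : j ∈ s := hj ▸ Finset.mem_singleton_self j
      simpa [hs] using this
    exact hnz j ((smul_eq_zero.mp hsum).resolve_left hxj)
  · obtain ⟨j, k, hjk, hjk2⟩ := Finset.card_eq_two.mp hc
    have hxj : x j ≠ 0 := by
      have : j ∈ s := hjk2 ▸ Finset.mem_insert_self j {k}
      simpa [hs] using this
    have hxk : x k ≠ 0 := by
      have : k ∈ s := hjk2 ▸ (by simp : k ∈ ({j, k} : Finset (Fin n)))
      simpa [hs] using this
    rw [hjk2, Finset.sum_pair hjk] at hsum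
    have : h j = ((x j)⁻¹ * (-(x k))) • h k := by
      have h1 : x j • h j = -(x k • h k) := by
        rw [eq_neg_iff_add_eq_zero]; exact hsum
      calc h j = (x j)⁻¹ • (x j • h j) := by rw [smul_smul, inv_mul_cancel₀ hxj, one_smul]
        _ = (x j)⁻¹ • (-(x k • h k)) := by rw [h1]
        _ = ((x j)⁻¹ * (-(x k))) • h k := by
            rw [mul_smul]; congr 1; rw [neg_smul]
    exact hnp j k hjk _ this

/-- for any codeword `u` of the `q`-ary Hamming code `H_{q,m}`,
the coset `R_i + u` of the principal `i`-component is an `i`-component of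
`H_{q,m}`. -/
theorem principal_component_coset_is_i_component
    (h : Fin n → Fin m → F) (hm : 2 ≤ m)
    (hn : n = (Fintype.card F ^ m - 1) / (Fintype.card F - 1))
    (hnz : ∀ j, h j ≠ 0)
    (hnp : ∀ j k, j ≠ k → ∀ c : F, h j ≠ c • h k)
    (hcover : ∀ z : Fin m → F, z ≠ 0 → ∃ j, ∃ c : F, z = c • h j)
    (i : Fin n) (u : Fin n → F) (hu : u ∈ parityCheckCode h) :
    IsIComponent (parityCheckCode h : Set (Fin n → F)) i
      {w | ∃ r ∈ principalComponent h i, w = r + u} := by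
  classical
  set C : Submodule F (Fin n → F) := parityCheckCode h with hC
  set S : Set (Fin n → F) :=
    {t | t ∈ parityCheckCode h ∧ hammingNorm t = 3 ∧ t i = 1} with hSdef
  have hSC : S ⊆ (C : Set (Fin n → F)) := fun t ht => ht.1
  -- one adjacency step
  have step : ∀ a ∈ C, ∀ t ∈ S, ∀ c : F, c ≠ 0 →
      PunctAdj (C : Set (Fin n → F)) i a (a + c • t) := by
    intro a ha t ht c hc
    refine ⟨ha, C.add_mem ha (C.smul_mem c ht.1), ?_⟩
    rw [punct_dist_eq]
    have hsub : (a + c • t) - a = c • t := add_sub_cancel_left a (c • t)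
    rw [hsub]
    have hnorm : hammingNorm (c • t) = 3 := by
      rw [hammingNorm_smul_ne hc, ht.2.1]
    have h1 := punct_norm_add (c • t) i
    have hti : (c • t) i ≠ 0 := by
      simp only [Pi.smul_apply, smul_eq_mul, ht.2.2, mul_one]; exact hc
    rw [if_pos hti] at h1
    omega
  -- closure of scaled triples
  set S' : Set (Fin n → F) := {x | ∃ c : F, ∃ t ∈ S, x = c • t} with hS'def
  have hspan : ∀ x ∈ principalComponent h i, x ∈ AddSubmonoid.closure S' := by
    intro x hx
    refine Submodule.span_induction ?_ ?_ ?_ ?_ hx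
    · intro t ht
      exact AddSubmonoid.subset_closure ⟨1, t, ht, (one_smul F t).symm⟩
    · exact AddSubmonoid.zero_mem _
    · intro x y _ _ hx hy; exact AddSubmonoid.add_mem _ hx hy
    · intro a x _ hx
      refine AddSubmonoid.closure_induction ?_ ?_ ?_ hx
      · rintro y ⟨c, t, ht, rfl⟩
        exact AddSubmonoid.subset_closure ⟨a * c, t, ht, (mul_smul a c t).symm⟩
      · rw [smul_zero]; exact AddSubmonoid.zero_mem _
      · intro y z _ _ hy hz
        rw [smul_add]; exact AddSubmonoid.add_mem _ hy hz
  -- forward reachability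
  have key : ∀ x ∈ AddSubmonoid.closure S',
      x ∈ C ∧ ∀ w ∈ C, Relation.ReflTransGen (PunctAdj (C : Set (Fin n → F)) i) w (w + x) := by
    intro x hx
    refine AddSubmonoid.closure_induction ?_ ?_ ?_ hx
    · rintro y ⟨c, t, ht, rfl⟩
      refine ⟨C.smul_mem c ht.1, ?_⟩
      intro w hw
      by_cases hc : c = 0
      · simpa [hc] using Relation.ReflTransGen.refl
      · exact Relation.ReflTransGen.single (step w hw t ht c hc)
    · exact ⟨C.zero_mem, fun w hw => by simpa using Relation.ReflTransGen.refl⟩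
    · rintro y z _ _ ⟨hyC, hy⟩ ⟨hzC, hz⟩
      refine ⟨C.add_mem hyC hzC, fun w hw => ?_⟩
      have h2 := hz (w + y) (C.add_mem hw hyC)
      rw [add_assoc] at h2
      exact (hy w hw).trans h2
  -- backward step
  have back : ∀ a b, PunctAdj (C : Set (Fin n → F)) i a b →
      b - a ∈ principalComponent h i := by
    rintro a b ⟨ha, hb, hdist⟩
    set d : Fin n → F := b - a with hd
    have hdC : d ∈ C := C.sub_mem hb ha
    rw [punct_dist_eq] at hdist
    rw [← hd] at hdist
    have h1 := punct_norm_add d i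
    have hd0 : d ≠ 0 := by
      intro h0
      rw [h0] at hdist
      simp [hammingNorm] at hdist
    have h3 := mindist h hnz hnp hdC hd0
    have hdi : d i ≠ 0 := by
      intro h0
      rw [hdist, if_neg (by simpa using h0)] at h1
      omega
    rw [hdist, if_pos hdi] at h1
    have htS : (d i)⁻¹ • d ∈ S := by
      refine ⟨C.smul_mem _ hdC, ?_, ?_⟩
      · rw [hammingNorm_smul_ne (inv_ne_zero hdi)]; omega
      · simp only [Pi.smul_apply, smul_eq_mul]; exact inv_mul_cancel₀ hdi
    have hdrw : d = (d i) • ((d i)⁻¹ • d) := by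
      rw [smul_smul, mul_inv_cancel₀ hdi, one_smul]
    rw [hdrw]
    exact Submodule.smul_mem _ _ (Submodule.subset_span htS)
  -- assemble
  refine ⟨u, hu, ?_⟩
  ext y
  simp only [Set.mem_setOf_eq]
  constructor
  · rintro ⟨r, hr, rfl⟩
    obtain ⟨hrC, hreach⟩ := key r (hspan r hr)
    refine ⟨C.add_mem hrC hu, ?_⟩
    have := hreach u hu
    rwa [add_comm] at this
  · rintro ⟨hyC, hreach⟩
    clear hyC
    induction hreach with
    | refl => exact ⟨0, Submodule.zero_mem _, by simp⟩
    | @tail b c hab hbc ih =>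
      obtain ⟨r, hr, rfl⟩ := ih
      have hd := back _ _ hbc
      refine ⟨r + (c - (r + u)), add_mem hr hd, by abel⟩
end
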